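/- arXiv:1807.08487 — 4 statements merged into one kernel-verified Lean document; each statement's English description precedes it below -/
import Mathlib

section
/- Global mintermisation preserves the concrete transition relation: replacing each transition (p, φ, q) by the transitions (p, ω, q) for all minterms ω of the set of all transition predicates with ⟦ω⟧ ∩ ⟦φ⟧ ≠ ∅ yields an SFA with the same set of concrete transitions ⟦Δ⟧ = ⟦Δ_G⟧. -/
/-- An effective Boolean algebra over domain `D` with predicates `P`. -/
structure EBA (D P : Type) where
  denote : P → Set D
  disj : P → P → P
  conj : P → P → P
  neg : P → P
  top : P
  bot : P
  denote_disj : ∀ φ ψ, denote (disj φ ψ) = denote φ ∪ denote ψ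
  denote_conj : ∀ φ ψ, denote (conj φ ψ) = denote φ ∩ denote ψ
  denote_neg : ∀ φ, denote (neg φ) = (denote φ)ᶜ
  denote_top : denote top = Set.univ
  denote_bot : denote bot = ∅

/-- Conjunction of a list of predicates. -/
def EBA.bigConj {D P : Type} (A : EBA D P) : List P → P
  | [] => A.top
  | φ :: l => A.conj φ (A.bigConj l)

/-- The minterm of `Φ` determined by the subset `Φ' ⊆ Φ`:
`⋀_{φ∈Φ'} φ ∧ ⋀_{φ∈Φ∖Φ'} ¬φ`. -/
noncomputable def EBA.mintermOf {D P : Type} [DecidableEq P] (A : EBA D P) (Φ Φ' : Finset P) : P :=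
  A.conj (A.bigConj Φ'.toList) (A.bigConj ((Φ \ Φ').toList.map A.neg))

/-- The globally mintermised transition relation: each `(p,φ,q) ∈ Δ` is replaced
by `(p,ω,q)` for all minterms `ω` of the set `PD` of all transition predicates
with `⟦ω⟧ ∩ ⟦φ⟧ ≠ ∅`. -/
def globalMinterms {Q D P : Type} [DecidableEq P] (A : EBA D P)
    (Δ : Set (Q × P × Q)) (PD : Finset P) : Set (Q × P × Q) :=
  {y | ∃ (φ : P) (Φ' : Finset P), (y.1, φ, y.2.2) ∈ Δ ∧ Φ' ⊆ PD ∧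
    y.2.1 = A.mintermOf PD Φ' ∧ (A.denote y.2.1).Nonempty ∧
    (A.denote y.2.1 ∩ A.denote φ).Nonempty}

lemma mem_bigConj {D P : Type} (A : EBA D P) (l : List P) (a : D) :
    a ∈ A.denote (A.bigConj l) ↔ ∀ φ ∈ l, a ∈ A.denote φ := by
  induction l with
  | nil => simp [EBA.bigConj, A.denote_top]
  | cons φ l ih => simp [EBA.bigConj, A.denote_conj, ih]

lemma mem_mintermOf {D P : Type} [DecidableEq P] (A : EBA D P) (Φ Φ' : Finset P) (a : D) :
    a ∈ A.denote (A.mintermOf Φ Φ') ↔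
      (∀ φ ∈ Φ', a ∈ A.denote φ) ∧ (∀ φ ∈ Φ \ Φ', a ∉ A.denote φ) := by
  simp only [EBA.mintermOf, A.denote_conj, Set.mem_inter_iff, mem_bigConj, List.mem_map,
    Finset.mem_toList, Finset.mem_sdiff]
  constructor
  · rintro ⟨h1, h2⟩
    refine ⟨h1, fun φ ⟨hΦ, hΦ'⟩ ha => ?_⟩
    have := h2 _ ⟨φ, ⟨hΦ, hΦ'⟩, rfl⟩
    rw [A.denote_neg] at this
    exact this ha
  · rintro ⟨h1, h2⟩
    refine ⟨h1, ?_⟩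
    rintro _ ⟨x, ⟨hΦ, hΦ'⟩, rfl⟩
    rw [A.denote_neg]
    exact h2 x ⟨hΦ, hΦ'⟩

/-- Global mintermisation preserves the concrete transition relation. -/
theorem globalMinterms_preserves_concrete {Q D P : Type} [DecidableEq P]
    (A : EBA D P) (Δ : Set (Q × P × Q)) (PD : Finset P)
    (hPD : ↑PD = {φ : P | ∃ p q, (p, φ, q) ∈ Δ})
    (hsat : ∀ p φ q, (p, φ, q) ∈ Δ → (A.denote φ).Nonempty) :
    {x : Q × D × Q | ∃ ψ, (x.1, ψ, x.2.2) ∈ Δ ∧ x.2.1 ∈ A.denote ψ} =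
    {x : Q × D × Q | ∃ ω, (x.1, ω, x.2.2) ∈ globalMinterms A Δ PD ∧
      x.2.1 ∈ A.denote ω} := by
  ext ⟨p, a, q⟩
  simp only [Set.mem_setOf_eq]
  constructor
  · rintro ⟨ψ, hψ, ha⟩
    classical
    set Φ' : Finset P := PD.filter (fun φ => a ∈ A.denote φ) with hΦ'
    have hmem : a ∈ A.denote (A.mintermOf PD Φ') := by
      rw [mem_mintermOf]
      constructor
      · intro φ hφ
        exact (Finset.mem_filter.mp hφ).2
      · intro φ hφ hcon
        rcases Finset.mem_sdiff.mp hφ with ⟨h1, h2⟩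
        exact h2 (Finset.mem_filter.mpr ⟨h1, hcon⟩)
    refine ⟨A.mintermOf PD Φ', ⟨ψ, Φ', hψ, Finset.filter_subset _ _, rfl, ⟨a, hmem⟩,
      ⟨a, hmem, ha⟩⟩, hmem⟩
  · rintro ⟨ω, ⟨φ, Φ', hφΔ, hsub, rfl, _, ⟨b, hbω, hbφ⟩⟩, ha⟩
    refine ⟨φ, hφΔ, ?_⟩
    have hφPD : φ ∈ PD := by
      have : φ ∈ (↑PD : Set P) := by rw [hPD]; exact ⟨p, q, hφΔ⟩
      exact this
    have hφΦ' : φ ∈ Φ' := by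
      by_contra h
      exact (mem_mintermOf A PD Φ' b).mp hbω |>.2 φ (Finset.mem_sdiff.mpr ⟨hφPD, h⟩) hbφ
    exact ((mem_mintermOf A PD Φ' a).mp ha).1 φ hφΦ'
end

section
/- Let M be a globally mintermised SFA and N its syntactic NFA over the alphabet of transition predicates (predicates treated as letters). Then a relation R ⊆ Q × Q is a simulation on M if and only if R is a simulation on N; consequently, the maximal simulation on M equals the maximal simulation on N. -/
/-- A symbolic finite automaton: states `Q`, domain `D`, predicates `P`
with denotation `denote`, symbolic transitions `Δ`, initial and final states. -/
structure SFA (Q D P : Type) where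
  denote : P → Set D
  Δ : Set (Q × P × Q)
  I : Set Q
  F : Set Q

/-- Concrete transition `q →a p`. -/
def SFA.Move {Q D P : Type} (M : SFA Q D P) (q : Q) (a : D) (p : Q) : Prop :=
  ∃ ψ, (q, ψ, p) ∈ M.Δ ∧ a ∈ M.denote ψ

/-- `S` is a simulation on `M`. -/
def SFA.IsSimulation {Q D P : Type} (M : SFA Q D P) (S : Set (Q × Q)) : Prop :=
  ∀ p r, (p, r) ∈ S →
    (p ∈ M.F → r ∈ M.F) ∧
    ∀ a p', M.Move p a p' → ∃ r', M.Move r a r' ∧ (p', r') ∈ S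

/-- `S` is a simulation on the syntactic NFA of `M` (predicates treated as letters). -/
def SFA.IsSyntacticSimulation {Q D P : Type} (M : SFA Q D P) (S : Set (Q × Q)) : Prop :=
  ∀ p r, (p, r) ∈ S →
    (p ∈ M.F → r ∈ M.F) ∧
    ∀ ψ p', (p, ψ, p') ∈ M.Δ → ∃ r', (r, ψ, r') ∈ M.Δ ∧ (p', r') ∈ S

/-- On a globally mintermised SFA (transition predicates are satisfiable and
pairwise disjoint), a relation is a simulation on the SFA iff it is a
simulation on its syntactic NFA; consequently the maximal simulations coincide. -/
theorem globally_mintermised_sim_iff_syntactic_sim {Q D P : Type} (M : SFA Q D P)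
    (hsat : ∀ p φ q, (p, φ, q) ∈ M.Δ → (M.denote φ).Nonempty)
    (hpart : ∀ φ ψ, φ ∈ {φ : P | ∃ p q, (p, φ, q) ∈ M.Δ} →
      ψ ∈ {φ : P | ∃ p q, (p, φ, q) ∈ M.Δ} → φ ≠ ψ →
      M.denote φ ∩ M.denote ψ = ∅) :
    (∀ R : Set (Q × Q), M.IsSimulation R ↔ M.IsSyntacticSimulation R) ∧
    ⋃₀ {S | M.IsSimulation S} = ⋃₀ {S | M.IsSyntacticSimulation S} := by
  have key : ∀ R : Set (Q × Q), M.IsSimulation R ↔ M.IsSyntacticSimulation R := by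
    intro R
    constructor
    · intro h p r hpr
      obtain ⟨hF, hmove⟩ := h p r hpr
      refine ⟨hF, ?_⟩
      intro ψ p' hδ
      obtain ⟨a, ha⟩ := hsat p ψ p' hδ
      obtain ⟨r', ⟨φ, hφδ, haφ⟩, hS⟩ := hmove a p' ⟨ψ, hδ, ha⟩
      have : φ = ψ := by
        by_contra hne
        have := hpart φ ψ ⟨r, r', hφδ⟩ ⟨p, p', hδ⟩ hne
        exact absurd this (Set.nonempty_iff_ne_empty.mp ⟨a, haφ, ha⟩)
      exact ⟨r', this ▸ hφδ, hS⟩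
    · intro h p r hpr
      obtain ⟨hF, hmove⟩ := h p r hpr
      refine ⟨hF, ?_⟩
      rintro a p' ⟨ψ, hδ, ha⟩
      obtain ⟨r', hδ', hS⟩ := hmove ψ p' hδ
      exact ⟨r', ⟨ψ, hδ', ha⟩, hS⟩
  refine ⟨key, ?_⟩
  have hset : {S | M.IsSimulation S} = {S | M.IsSyntacticSimulation S} :=
    Set.ext fun S => key S
  rw [hset]
end

section
/- Local mintermisation preserves concrete transitions: for each state p, replacing every transition (p, φ, q) by the transitions (p, ω, q) for all minterms ω of the predicates on p's outgoing transitions with ⟦ω⟧ ∩ ⟦φ⟧ ≠ ∅ yields an SFA with ⟦Δ_L⟧ = ⟦Δ⟧. -/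
/-- The locally mintermised transition relation: each `(p,φ,q) ∈ Δ` is replaced
by `(p,ω,q)` for all minterms `ω` of the predicates `PD p` on `p`'s outgoing
transitions with `⟦ω⟧ ∩ ⟦φ⟧ ≠ ∅`. -/
def localMinterms {Q D P : Type} [DecidableEq P] (A : EBA D P)
    (Δ : Set (Q × P × Q)) (PD : Q → Finset P) : Set (Q × P × Q) :=
  {y | ∃ (φ : P) (Φ' : Finset P), (y.1, φ, y.2.2) ∈ Δ ∧ Φ' ⊆ PD y.1 ∧
    y.2.1 = A.mintermOf (PD y.1) Φ' ∧ (A.denote y.2.1).Nonempty ∧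
    (A.denote y.2.1 ∩ A.denote φ).Nonempty}

/-- Local mintermisation preserves the concrete transition relation. -/
theorem localMinterms_preserves_concrete {Q D P : Type} [DecidableEq P]
    (A : EBA D P) (Δ : Set (Q × P × Q)) (PD : Q → Finset P)
    (hPD : ∀ p : Q, ↑(PD p) = {φ : P | ∃ q, (p, φ, q) ∈ Δ})
    (hsat : ∀ p φ q, (p, φ, q) ∈ Δ → (A.denote φ).Nonempty) :
    {x : Q × D × Q | ∃ ψ, (x.1, ψ, x.2.2) ∈ localMinterms A Δ PD ∧ x.2.1 ∈ A.denote ψ} =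
    {x : Q × D × Q | ∃ ψ, (x.1, ψ, x.2.2) ∈ Δ ∧ x.2.1 ∈ A.denote ψ} := by
  ext ⟨p, a, q⟩
  simp only [Set.mem_setOf_eq]
  constructor
  · rintro ⟨ω, ⟨φ, Φ', hΔ, hsub, hω, -, hne⟩, ha⟩
    refine ⟨φ, hΔ, ?_⟩
    have hφΦ : φ ∈ PD p := by
      have : φ ∈ (PD p : Set P) := by rw [hPD p]; exact ⟨q, hΔ⟩
      exact this
    have hω' : ω = A.mintermOf (PD p) Φ' := hω
    by_cases hφ' : φ ∈ Φ'
    · exact ((mem_mintermOf A _ _ a).1 (hω' ▸ ha)).1 φ hφ'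
    · obtain ⟨b, hbω, hbφ⟩ := hne
      have := ((mem_mintermOf A _ _ b).1 (hω' ▸ hbω)).2 φ (Finset.mem_sdiff.2 ⟨hφΦ, hφ'⟩)
      exact absurd hbφ this
  · rintro ⟨φ, hΔ, ha⟩
    classical
    set Φ' : Finset P := (PD p).filter (fun ψ => a ∈ A.denote ψ) with hΦ'
    have hφΦ : φ ∈ PD p := by
      have : φ ∈ (PD p : Set P) := by rw [hPD p]; exact ⟨q, hΔ⟩
      exact this
    have haω : a ∈ A.denote (A.mintermOf (PD p) Φ') := by
      rw [mem_mintermOf]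
      constructor
      · intro ψ hψ; exact (Finset.mem_filter.1 hψ).2
      · intro ψ hψ hmem
        obtain ⟨h1, h2⟩ := Finset.mem_sdiff.1 hψ
        exact h2 (Finset.mem_filter.2 ⟨h1, hmem⟩)
    exact ⟨A.mintermOf (PD p) Φ', ⟨φ, Φ', hΔ, Finset.filter_subset _ _, rfl,
      ⟨a, haω⟩, ⟨a, haω, ha⟩⟩, haω⟩
end

section
/- For any SFA, states s, t, i, and any relation R ⊆ Q × Q, the predicate φ_{si} ∧ ¬Γ_t(R(i)) is satisfiable if and only if there exists a symbol a ∈ D and a transition s →a i such that every j with t →a j satisfies (i, j) ∉ R. -/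
/-- The denotation of `φ_{si}`, the disjunction of the predicates on transitions
from `s` to `i`. -/
def SFA.phiDenote {Q D P : Type} (M : SFA Q D P) (s i : Q) : Set D :=
  ⋃ ψ ∈ {ψ : P | (s, ψ, i) ∈ M.Δ}, M.denote ψ

/-- The denotation of `Γ_t(J)`, the disjunction of all predicates on transitions
from `t` into `J`. -/
def SFA.gammaDenote {Q D P : Type} (M : SFA Q D P) (t : Q) (J : Set Q) : Set D :=
  ⋃ j ∈ J, M.phiDenote t j

/-- `φ_{si} ∧ ¬Γ_t(R(i))` is satisfiable iff there is a symbol `a` and a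
transition `s →a i` such that every `j` with `t →a j` satisfies `(i,j) ∉ R`. -/
theorem sat_phi_and_neg_gamma_iff {Q D P : Type} (M : SFA Q D P) (s t i : Q)
    (R : Set (Q × Q)) :
    (M.phiDenote s i ∩ (M.gammaDenote t {j | (i, j) ∈ R})ᶜ).Nonempty ↔
    ∃ a : D, M.Move s a i ∧ ∀ j, M.Move t a j → (i, j) ∉ R := by
  constructor
  · rintro ⟨a, ha, hn⟩
    simp only [SFA.phiDenote, Set.mem_iUnion, Set.mem_setOf_eq] at ha
    obtain ⟨ψ, hψ, haψ⟩ := ha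
    refine ⟨a, ⟨ψ, hψ, haψ⟩, ?_⟩
    rintro j ⟨ψ', hψ', haψ'⟩ hR
    apply hn
    simp only [SFA.gammaDenote, SFA.phiDenote, Set.mem_iUnion, Set.mem_setOf_eq]
    exact ⟨j, hR, ψ', hψ', haψ'⟩
  · rintro ⟨a, ⟨ψ, hψ, haψ⟩, h⟩
    refine ⟨a, ?_, ?_⟩
    · simp only [SFA.phiDenote, Set.mem_iUnion, Set.mem_setOf_eq]
      exact ⟨ψ, hψ, haψ⟩
    · intro hg
      simp only [SFA.gammaDenote, SFA.phiDenote, Set.mem_iUnion, Set.mem_setOf_eq] at hg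
      obtain ⟨j, hR, ψ', hψ', haψ'⟩ := hg
      exact h j ⟨ψ', hψ', haψ'⟩ hR
end
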